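/- arXiv:1302.1736 — 6 statements merged into one kernel-verified Lean document; each statement's English description precedes it below -/
import Mathlib

section
/- Let B be the unweighted backward shift on l^∞(ℕ) and let λ ∈ ℂ with |λ| ≤ 2. Then for every x ∈ l^∞(ℕ) the extended limit set J_{I+λB}(x) has empty interior in l^∞(ℕ); in particular, there is no nonzero x ∈ l^∞(ℕ) with J_{I+λB}(x) = l^∞(ℕ), i.e. I+λB is not locally topologically transitive. -/
open Filter Topology
open scoped ENNReal

/-- The unweighted backward shift on `l^∞(ℕ)`, the space of bounded sequences of
complex numbers with the supremum norm. -/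
noncomputable def backwardShift : lp (fun _ : ℕ => ℂ) ∞ →L[ℂ] lp (fun _ : ℕ => ℂ) ∞ :=
  LinearMap.mkContinuous
    { toFun := fun x => ⟨fun n => x (n + 1), memℓp_infty ⟨‖x‖, by
        rintro r ⟨n, rfl⟩
        exact lp.norm_apply_le_norm ENNReal.top_ne_zero x (n + 1)⟩⟩
      map_add' := fun x y => by ext n; exact congrFun rfl n
      map_smul' := fun c x => by ext n; rfl }
    1
    (fun x => by
      rw [one_mul]
      apply lp.norm_le_of_forall_le (norm_nonneg x)
      intro n
      exact lp.norm_apply_le_norm ENNReal.top_ne_zero x (n + 1))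

/-- The extended (prolongational) limit set `J_T(x)`: all `y` for which there exist a
strictly increasing sequence `(k_n)` of positive integers and a sequence `(x_n)` with
`x_n → x` and `T^{k_n} x_n → y`. -/
noncomputable def Jset {X : Type*} [SeminormedAddCommGroup X] [NormedSpace ℂ X]
    (T : X →L[ℂ] X) (x : X) : Set X :=
  {y | ∃ k : ℕ → ℕ, StrictMono k ∧ (∀ n, 0 < k n) ∧
    ∃ u : ℕ → X, Tendsto u atTop (𝓝 x) ∧ Tendsto (fun n => (T ^ (k n)) (u n)) atTop (𝓝 y)}

noncomputable def UU : Ultrafilter ℕ := Ultrafilter.of atTop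

lemma UU_le : (UU : Filter ℕ) ≤ atTop := Ultrafilter.of_le _

noncomputable def ces (v : ℕ → ℂ) (n : ℕ) : ℂ :=
  (∑ k ∈ Finset.range (n+1), v k) / (n+1)

noncomputable def Lfun (v : ℕ → ℂ) : ℂ := limUnder (UU : Filter ℕ) (ces v)

lemma ces_bound {v : ℕ → ℂ} {C : ℝ} (hv : ∀ n, ‖v n‖ ≤ C) (n : ℕ) : ‖ces v n‖ ≤ C := by
  have h1 : ‖∑ k ∈ Finset.range (n+1), v k‖ ≤ (n+1) * C := by
    calc ‖∑ k ∈ Finset.range (n+1), v k‖ ≤ ∑ k ∈ Finset.range (n+1), ‖v k‖ :=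
      norm_sum_le _ _
    _ ≤ ∑ _k ∈ Finset.range (n+1), C := Finset.sum_le_sum fun k _ => hv k
    _ = (n+1) * C := by simp
  have h2 : ‖((n:ℂ)+1)‖ = (n:ℝ)+1 := by
    norm_cast
  rw [ces, norm_div, h2, div_le_iff₀ (by positivity)]
  linarith [h1]

lemma tendsto_Lfun {v : ℕ → ℂ} {C : ℝ} (hv : ∀ n, ‖v n‖ ≤ C) :
    Tendsto (ces v) (UU : Filter ℕ) (𝓝 (Lfun v)) := by
  have hC : (0:ℝ) ≤ C := le_trans (norm_nonneg _) (hv 0)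
  have hmem : Tendsto (ces v) (UU : Filter ℕ) (Filter.principal (Metric.closedBall 0 C)) := by
    rw [tendsto_principal]
    exact Filter.Eventually.of_forall fun n => by
      simpa [Metric.mem_closedBall, dist_zero_right] using ces_bound hv n
  obtain ⟨z, _, hz⟩ := (isCompact_closedBall (0:ℂ) C).ultrafilter_le_nhds
    (UU.map (ces v)) (by rw [Ultrafilter.coe_map]; exact hmem)
  exact tendsto_nhds_limUnder ⟨z, hz⟩

lemma Lfun_eq {v : ℕ → ℂ} {C : ℝ} (hv : ∀ n, ‖v n‖ ≤ C) {z : ℂ}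
    (h : Tendsto (ces v) (UU : Filter ℕ) (𝓝 z)) : Lfun v = z :=
  tendsto_nhds_unique (tendsto_Lfun hv) h

lemma Lfun_norm_le {v : ℕ → ℂ} {C : ℝ} (hv : ∀ n, ‖v n‖ ≤ C) : ‖Lfun v‖ ≤ C :=
  le_of_tendsto (tendsto_Lfun hv).norm (Filter.Eventually.of_forall (ces_bound hv))

lemma Lfun_add {v w : ℕ → ℂ} {C D : ℝ} (hv : ∀ n, ‖v n‖ ≤ C) (hw : ∀ n, ‖w n‖ ≤ D) :
    Lfun (fun n => v n + w n) = Lfun v + Lfun w := by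
  apply Lfun_eq (C := C + D)
    (fun n => le_trans (norm_add_le _ _) (add_le_add (hv n) (hw n)))
  have : ces (fun n => v n + w n) = fun n => ces v n + ces w n := by
    funext n; simp [ces, Finset.sum_add_distrib, add_div]
  rw [this]
  exact ((tendsto_Lfun hv).add (tendsto_Lfun hw))

lemma Lfun_smul (c : ℂ) {v : ℕ → ℂ} {C : ℝ} (hv : ∀ n, ‖v n‖ ≤ C) :
    Lfun (fun n => c * v n) = c * Lfun v := by
  apply Lfun_eq (C := ‖c‖ * C)
    (fun n => by rw [norm_mul]; exact mul_le_mul_of_nonneg_left (hv n) (norm_nonneg c))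
  have : ces (fun n => c * v n) = fun n => c * ces v n := by
    funext n; simp [ces, ← Finset.mul_sum, mul_div_assoc]
  rw [this]
  exact (tendsto_Lfun hv).const_mul c

lemma Lfun_const (c : ℂ) : Lfun (fun _ => c) = c := by
  apply Lfun_eq (C := ‖c‖) (fun n => le_refl _)
  have : ces (fun _ => c) = fun _ => c := by
    funext n
    have hn : ((n:ℂ)+1) ≠ 0 := Nat.cast_add_one_ne_zero n
    simp [ces]
    field_simp
  rw [this]
  exact tendsto_const_nhds

lemma Lfun_shift {v : ℕ → ℂ} {C : ℝ} (hv : ∀ n, ‖v n‖ ≤ C) :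
    Lfun (fun n => v (n+1)) = Lfun v := by
  apply Lfun_eq (C := C) (fun n => hv (n+1))
  have key : ∀ n, ces (fun m => v (m+1)) n = ces v n + (v (n+1) - v 0) / ((n:ℂ)+1) := by
    intro n
    rw [ces, ces, ← add_div]
    congr 1
    rw [Finset.sum_range_succ' (fun k => v k) n]
    rw [Finset.sum_range_succ (fun k => v (k+1)) n]
    ring
  have hg : Tendsto (fun n : ℕ => (v (n+1) - v 0) / ((n:ℂ)+1)) atTop (𝓝 0) := by
    apply squeeze_zero_norm (a := fun n : ℕ => (2*C) / ((n:ℝ)+1))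
    · intro n
      rw [norm_div]
      have h2 : ‖((n:ℂ)+1)‖ = (n:ℝ)+1 := by norm_cast
      rw [h2]
      gcongr
      exact le_trans (norm_sub_le _ _) (by linarith [hv (n+1), hv 0])
    · have h := (tendsto_const_div_atTop_nhds_zero_nat (2*C)).comp
        (tendsto_add_atTop_nat 1)
      refine h.congr fun n => ?_
      simp only [Function.comp]
      push_cast
      ring_nf
  have := (tendsto_Lfun hv).add (hg.mono_left UU_le)
  rw [add_zero] at this
  exact this.congr (fun n => (key n).symm)

noncomputable abbrev Xsp := lp (fun _ : ℕ => ℂ) ∞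

lemma bs_apply (x : Xsp) (n : ℕ) : (backwardShift x) n = x (n+1) := rfl
lemma T_apply (lam : ℂ) (x : Xsp) (n : ℕ) :
    ((1 + lam • backwardShift) x) n = x n + lam * x (n+1) := by
  simp [ContinuousLinearMap.add_apply, ContinuousLinearMap.smul_apply, bs_apply]
  rfl
lemma coord_bound (x : Xsp) (n : ℕ) : ‖x n‖ ≤ ‖x‖ :=
  lp.norm_apply_le_norm ENNReal.top_ne_zero x n

section Phi
variable (mu : ℂ)
variable (hmu : ‖mu‖ = 1)
include hmu

noncomputable def Phi (x : Xsp) : ℂ := Lfun (fun n => mu ^ n * x n)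

lemma phi_seq_bound (x : Xsp) (n : ℕ) : ‖mu ^ n * x n‖ ≤ ‖x‖ := by
  rw [norm_mul, norm_pow, hmu, one_pow, one_mul]; exact coord_bound x n

lemma phi_seq_bound' (x : Xsp) (n : ℕ) : ‖mu ^ n * x (n+1)‖ ≤ ‖x‖ := by
  rw [norm_mul, norm_pow, hmu, one_pow, one_mul]; exact coord_bound x (n+1)

lemma Phi_sub_add (x y : Xsp) : Phi mu (x - y) + Phi mu y = Phi mu x := by
  rw [Phi, Phi, Phi, ← Lfun_add (phi_seq_bound mu hmu (x-y)) (phi_seq_bound mu hmu y)]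
  congr 1
  funext n
  have : (x - y) n = x n - y n := by simp
  rw [this]; ring

lemma Phi_dist (x y : Xsp) : ‖Phi mu x - Phi mu y‖ ≤ ‖x - y‖ := by
  have := Phi_sub_add mu hmu x y
  have h2 : Phi mu x - Phi mu y = Phi mu (x - y) := by rw [← this]; ring
  rw [h2]
  exact Lfun_norm_le (phi_seq_bound mu hmu (x - y))

lemma Phi_tendsto {u : ℕ → Xsp} {x : Xsp} (h : Tendsto u atTop (𝓝 x)) :
    Tendsto (fun n => Phi mu (u n)) atTop (𝓝 (Phi mu x)) := by
  rw [tendsto_iff_norm_sub_tendsto_zero]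
  apply squeeze_zero_norm (a := fun n => ‖u n - x‖)
  · intro n; rw [norm_norm]; exact Phi_dist mu hmu _ _
  · exact (tendsto_iff_norm_sub_tendsto_zero.mp h)

lemma Phi_shiftop (x : Xsp) (hmu0 : mu ≠ 0) :
    Phi mu (backwardShift x) = mu⁻¹ * Phi mu x := by
  rw [Phi, Phi]
  have h1 : (fun n => mu ^ n * (backwardShift x) n)
      = fun n => mu⁻¹ * (mu ^ (n+1) * x (n+1)) := by
    funext n
    rw [bs_apply, pow_succ]
    field_simp
  rw [h1, Lfun_smul mu⁻¹ (fun n => phi_seq_bound mu hmu x (n+1))]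
  rw [Lfun_shift (v := fun n => mu ^ n * x n) (phi_seq_bound mu hmu x)]

lemma Phi_T (lam : ℂ) (x : Xsp) (hmu0 : mu ≠ 0) :
    Phi mu ((1 + lam • backwardShift) x) = (1 + lam * mu⁻¹) * Phi mu x := by
  have hb : ∀ n, ‖lam * (mu ^ n * x (n+1))‖ ≤ ‖lam‖ * ‖x‖ := by
    intro n
    rw [norm_mul, norm_mul, norm_pow, hmu, one_pow, one_mul]
    exact mul_le_mul_of_nonneg_left (coord_bound x (n+1)) (norm_nonneg lam)
  have h1 : (fun n => mu ^ n * ((1 + lam • backwardShift) x) n)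
      = fun n => mu ^ n * x n + lam * (mu ^ n * x (n+1)) := by
    funext n; rw [T_apply]; ring
  rw [Phi, h1, Lfun_add (phi_seq_bound mu hmu x) hb,
    Lfun_smul lam (phi_seq_bound' mu hmu x)]
  have h2 : Lfun (fun n => mu ^ n * x (n+1)) = mu⁻¹ * Phi mu x := by
    rw [← Phi_shiftop mu hmu x hmu0]; rfl
  rw [h2, Phi]
  ring

lemma Phi_pow (lam : ℂ) (x : Xsp) (hmu0 : mu ≠ 0) (k : ℕ) :
    Phi mu (((1 + lam • backwardShift) ^ k) x) = (1 + lam * mu⁻¹) ^ k * Phi mu x := by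
  induction k generalizing x with
  | zero => simp
  | succ k ih =>
    rw [pow_succ, ContinuousLinearMap.mul_apply, ih ((1 + lam • backwardShift) x),
      Phi_T mu hmu lam x hmu0, pow_succ]
    ring

noncomputable def dvec : Xsp := ⟨fun n => mu⁻¹ ^ n, memℓp_infty ⟨1, by
  rintro r ⟨n, rfl⟩
  simp [norm_pow, norm_inv, hmu]⟩⟩

lemma Phi_dvec (hmu0 : mu ≠ 0) : Phi mu (dvec mu hmu) = 1 := by
  rw [Phi]
  have : (fun n => mu ^ n * (dvec mu hmu) n) = fun _ => (1:ℂ) := by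
    funext n
    have : (dvec mu hmu) n = mu⁻¹ ^ n := rfl
    rw [this, ← mul_pow, mul_inv_cancel₀ hmu0, one_pow]
  rw [this, Lfun_const]
end Phi

lemma Phi_addl (mu : ℂ) (hmu : ‖mu‖ = 1) (x y : Xsp) :
    Phi mu (x + y) = Phi mu x + Phi mu y := by
  rw [Phi, Phi, Phi, ← Lfun_add (phi_seq_bound mu hmu x) (phi_seq_bound mu hmu y)]
  congr 1
  funext n
  have : (x + y) n = x n + y n := by simp
  rw [this]; ring

lemma Phi_smull (mu : ℂ) (hmu : ‖mu‖ = 1) (c : ℂ) (x : Xsp) :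
    Phi mu (c • x) = c * Phi mu x := by
  rw [Phi, Phi, ← Lfun_smul c (phi_seq_bound mu hmu x)]
  congr 1
  funext n
  have : (c • x) n = c * x n := by simp
  rw [this]; ring

lemma dvec_norm_pos (mu : ℂ) (hmu : ‖mu‖ = 1) : 0 < ‖dvec mu hmu‖ := by
  have h0 : ‖(dvec mu hmu) 0‖ ≤ ‖dvec mu hmu‖ := coord_bound _ 0
  have h1 : (dvec mu hmu) 0 = 1 := by
    have : (dvec mu hmu) 0 = mu⁻¹ ^ 0 := rfl
    rw [this, pow_zero]
  rw [h1, norm_one] at h0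
  linarith

lemma level_empty (mu : ℂ) (hmu : ‖mu‖ = 1) (hmu0 : mu ≠ 0) (c : ℝ) :
    interior {y : Xsp | ‖Phi mu y‖ = c} = ∅ := by
  rw [Set.eq_empty_iff_forall_notMem]
  intro z hz
  have hzS : ‖Phi mu z‖ = c := (interior_subset hz : z ∈ {y : Xsp | ‖Phi mu y‖ = c})
  rw [mem_interior_iff_mem_nhds, Metric.mem_nhds_iff] at hz
  obtain ⟨ε, hε, hball⟩ := hz
  set d := dvec mu hmu with hd
  have hdpos : 0 < ‖d‖ := dvec_norm_pos mu hmu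
  have hdne : ‖d‖ ≠ 0 := ne_of_gt hdpos
  set t : ℝ := ε / (2 * ‖d‖) with ht
  have htpos : 0 < t := by positivity
  -- choose ζ
  set a : ℝ := ‖Phi mu z‖ with ha
  set ζ : ℂ := if h : Phi mu z = 0 then (t : ℂ) else ((t/a : ℝ) : ℂ) * Phi mu z with hζ
  have hζnorm : ‖ζ‖ = t := by
    rw [hζ]
    split_ifs with h
    · simp [abs_of_pos htpos]
    · have hapos : 0 < a := by simpa [ha, norm_pos_iff] using h
      rw [norm_mul, Complex.norm_real, Real.norm_eq_abs, abs_of_pos (by positivity), ← ha]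
      field_simp
  have hsum : ‖Phi mu z + ζ‖ = a + t := by
    rw [hζ]
    split_ifs with h
    · simp [h, ha, abs_of_pos htpos]
    · have hapos : 0 < a := by simpa [ha, norm_pos_iff] using h
      have : Phi mu z + ((t/a : ℝ) : ℂ) * Phi mu z = (((1 + t/a : ℝ)) : ℂ) * Phi mu z := by
        push_cast; ring
      rw [this, norm_mul, Complex.norm_real, Real.norm_eq_abs,
        abs_of_pos (by positivity), ← ha]
      field_simp
  set z' : Xsp := z + ζ • d with hz'
  have hz'mem : z' ∈ Metric.ball z ε := by
    rw [Metric.mem_ball, dist_eq_norm, hz']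
    have : z + ζ • d - z = ζ • d := by abel
    rw [this, norm_smul, hζnorm]
    have h2 : t * ‖d‖ = ε/2 := by
      rw [ht, div_mul_eq_mul_div, mul_comm ε ‖d‖, mul_comm 2 ‖d‖,
        mul_div_mul_left ε 2 hdne]
    linarith
  have hz'S : ‖Phi mu z'‖ = c := hball hz'mem
  rw [hz', Phi_addl mu hmu, Phi_smull mu hmu, Phi_dvec mu hmu hmu0, mul_one, hsum] at hz'S
  rw [hzS] at hz'S  -- a + t = c with a = c? careful: a = ‖Phi z‖ and hzS : a = c
  -- hz'S : a + t = c, hzS gives a = c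
  have : a = c := hzS
  linarith [hz'S, this]

set_option maxHeartbeats 2000000 in
/-- If `|λ| ≤ 2`, then for every `x ∈ l^∞(ℕ)` the extended limit set `J_{I+λB}(x)` has
empty interior; in particular, there is no nonzero `x` with `J_{I+λB}(x) = l^∞(ℕ)`,
i.e. `I + λB` is not locally topologically transitive. -/
theorem stmt0 (lam : ℂ) (hlam : ‖lam‖ ≤ 2) :
    (∀ x : lp (fun _ : ℕ => ℂ) ∞, interior (Jset (1 + lam • backwardShift) x) = ∅) ∧
    ¬ ∃ x : lp (fun _ : ℕ => ℂ) ∞, x ≠ 0 ∧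
        Jset (1 + lam • backwardShift) x = Set.univ := by
  obtain ⟨mu, hmu, halpha⟩ : ∃ mu : ℂ, ‖mu‖ = 1 ∧
      1 + lam * mu⁻¹ = ((1 - ‖lam‖ : ℝ) : ℂ) := by
    by_cases h : lam = 0
    · exact ⟨1, by simp, by simp [h]⟩
    · have hpos : (0:ℝ) < ‖lam‖ := norm_pos_iff.mpr h
      have hln : (‖lam‖ : ℂ) ≠ 0 := by
        simpa using ne_of_gt hpos
      refine ⟨-(lam / (‖lam‖ : ℂ)), ?_, ?_⟩
      · rw [norm_neg, norm_div, Complex.norm_real, Real.norm_eq_abs,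
          abs_of_pos hpos, div_self (ne_of_gt hpos)]
      · have hc : lam * (((‖lam‖:ℝ):ℂ) / lam) = ((‖lam‖:ℝ):ℂ) := by
          field_simp
        rw [inv_neg, inv_div, mul_neg, hc]
        push_cast
        ring
  have hmu0 : mu ≠ 0 := by
    intro h; rw [h] at hmu; simp at hmu
  have hnormpow : ∀ (k : ℕ) (z : ℂ), ‖(1 + lam * mu⁻¹) ^ k * z‖ = |1 - ‖lam‖| ^ k * ‖z‖ := by
    intro k z
    rw [norm_mul, norm_pow, halpha, Complex.norm_real, Real.norm_eq_abs]
  have hr0 : (0:ℝ) ≤ |1 - ‖lam‖| := abs_nonneg _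
  have hr : |1 - ‖lam‖| ≤ 1 := by
    rw [abs_le]
    constructor <;> [linarith; linarith [norm_nonneg lam]]
  have part1 : ∀ x : lp (fun _ : ℕ => ℂ) ∞,
      interior (Jset (1 + lam • backwardShift) x) = ∅ := by
    intro x
    have key : ∀ c : ℝ, Jset (1 + lam • backwardShift) x ⊆ {y : Xsp | ‖Phi mu y‖ = c} →
        interior (Jset (1 + lam • backwardShift) x) = ∅ := by
      intro c hsub
      apply Set.subset_empty_iff.mp
      calc interior (Jset (1 + lam • backwardShift) x)
          ⊆ interior {y : Xsp | ‖Phi mu y‖ = c} := interior_mono hsub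
        _ = ∅ := level_empty mu hmu hmu0 c
    rcases eq_or_lt_of_le hr with hr1 | hr1
    · apply key ‖Phi mu x‖
      rintro y ⟨k, hk, hkpos, u, hu, hTu⟩
      have h1 : Tendsto (fun n => ‖Phi mu (((1 + lam • backwardShift) ^ (k n)) (u n))‖)
          atTop (𝓝 ‖Phi mu y‖) := (Phi_tendsto mu hmu hTu).norm
      have h2 : Tendsto (fun n => ‖Phi mu (u n)‖) atTop (𝓝 ‖Phi mu x‖) :=
        (Phi_tendsto mu hmu hu).norm
      have h3 : Tendsto (fun n => ‖Phi mu (((1 + lam • backwardShift) ^ (k n)) (u n))‖)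
          atTop (𝓝 ‖Phi mu x‖) := by
        refine h2.congr fun n => ?_
        rw [Phi_pow mu hmu lam (u n) hmu0 (k n), hnormpow, hr1, one_pow, one_mul]
      exact tendsto_nhds_unique h1 h3
    · apply key 0
      rintro y ⟨k, hk, hkpos, u, hu, hTu⟩
      have hkT : Tendsto k atTop atTop := tendsto_atTop_mono hk.id_le tendsto_id
      have h1 : Tendsto (fun n => ‖Phi mu (((1 + lam • backwardShift) ^ (k n)) (u n))‖)
          atTop (𝓝 ‖Phi mu y‖) := (Phi_tendsto mu hmu hTu).norm
      have h2 : Tendsto (fun n => ‖Phi mu (u n)‖) atTop (𝓝 ‖Phi mu x‖) :=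
        (Phi_tendsto mu hmu hu).norm
      have hpow : Tendsto (fun n => |1 - ‖lam‖| ^ (k n)) atTop (𝓝 0) :=
        (tendsto_pow_atTop_nhds_zero_of_lt_one hr0 hr1).comp hkT
      have h3 : Tendsto (fun n => ‖Phi mu (((1 + lam • backwardShift) ^ (k n)) (u n))‖)
          atTop (𝓝 0) := by
        have := hpow.mul h2
        rw [zero_mul] at this
        refine this.congr fun n => ?_
        rw [Phi_pow mu hmu lam (u n) hmu0 (k n), hnormpow]
      exact tendsto_nhds_unique h1 h3
  refine ⟨part1, ?_⟩
  rintro ⟨x, hx0, hJ⟩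
  have h := part1 x
  rw [hJ, interior_univ] at h
  have : (0 : Xsp) ∈ (Set.univ : Set Xsp) := trivial
  rw [h] at this
  exact this
end

section
/- Let B be the unweighted backward shift on l^∞(ℕ) and let λ ∈ ℂ with |λ| > 1. Then for every y ∈ l^∞(ℕ) and every positive integer n there exists w ∈ l^∞(ℕ) such that (I+λB)^n w = y and ‖w‖_∞ ≤ ‖y‖_∞/(|λ|−1)^n. -/
set_option maxHeartbeats 2000000
set_option synthInstance.maxHeartbeats 1000000
open Filter Topology
open scoped ENNReal

/-- The forward shift on `l^∞(ℕ)`. -/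
noncomputable def forwardShift : lp (fun _ : ℕ => ℂ) ∞ →L[ℂ] lp (fun _ : ℕ => ℂ) ∞ :=
  LinearMap.mkContinuous
    { toFun := fun x => ⟨fun n => Nat.casesOn n 0 (fun k => x k), memℓp_infty ⟨‖x‖, by
        rintro r ⟨n, rfl⟩
        cases n with
        | zero => simpa using norm_nonneg x
        | succ k => exact lp.norm_apply_le_norm ENNReal.top_ne_zero x k⟩⟩
      map_add' := fun x y => by
        ext n
        cases n with
        | zero => simp [lp.coeFn_add]; exact (add_zero (0:ℂ)).symm
        | succ k => simp [lp.coeFn_add]; rfl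
      map_smul' := fun c x => by
        ext n
        cases n with
        | zero => simp [lp.coeFn_smul]
        | succ k => simp [lp.coeFn_smul] }
    1
    (fun x => by
      rw [one_mul]
      apply lp.norm_le_of_forall_le (norm_nonneg x)
      intro n
      cases n with
      | zero => simpa using norm_nonneg x
      | succ k => exact lp.norm_apply_le_norm ENNReal.top_ne_zero x k)

lemma forwardShift_norm_le : ‖forwardShift‖ ≤ 1 :=
  LinearMap.mkContinuous_norm_le _ zero_le_one _

lemma bf_apply (x : lp (fun _ : ℕ => ℂ) ∞) : backwardShift (forwardShift x) = x := by
  apply lp.ext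
  funext n
  rfl

lemma backward_mul_forward : backwardShift * forwardShift = 1 := by
  apply ContinuousLinearMap.ext
  intro x
  exact bf_apply x



lemma oneSub_inv_exists {A : Type*} [NormedRing A] [CompleteSpace A]
    (hone : ‖(1 : A)‖ ≤ 1) (t : A) {r : ℝ} (htr : ‖t‖ ≤ r) (hr0 : 0 ≤ r) (hr : r < 1) :
    ∃ v : A, (1 - t) * v = 1 ∧ ‖v‖ ≤ (1 - r)⁻¹ := by
  have ht : ‖t‖ < 1 := lt_of_le_of_lt htr hr
  refine ⟨↑(Units.oneSub t ht)⁻¹, ?_, ?_⟩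
  · have := (Units.oneSub t ht).mul_inv
    rwa [Units.val_oneSub] at this
  · have hval : ((Units.oneSub t ht)⁻¹ : Aˣ) = (∑' k : ℕ, t ^ k : A) := rfl
    rw [hval]
    have hpow : ∀ k : ℕ, ‖t ^ k‖ ≤ r ^ k := by
      intro k
      induction k with
      | zero => rw [pow_zero, pow_zero]; exact hone
      | succ m ih =>
          rw [pow_succ, pow_succ]
          exact le_trans (norm_mul_le _ _) (mul_le_mul ih htr (norm_nonneg t) (by positivity))
    exact tsum_of_norm_bounded (hasSum_geometric_of_lt_one hr0 hr) hpow

lemma main_aux {E : Type*} [NormedAddCommGroup E] [NormedSpace ℂ E] [CompleteSpace E]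
    (B S : E →L[ℂ] E) (hBS : B * S = 1) (hSle : ‖S‖ ≤ 1)
    (lam : ℂ) (hlam : 1 < ‖lam‖) (y : E) (n : ℕ) (hn : 0 < n) :
    ∃ w : E, ((1 + lam • B) ^ n) w = y ∧ ‖w‖ ≤ ‖y‖ / (‖lam‖ - 1) ^ n := by
  have hlam0 : lam ≠ 0 := by
    intro h; rw [h] at hlam; simp at hlam; linarith
  have hr0 : (0:ℝ) < ‖lam‖ := lt_trans one_pos hlam
  set r : ℝ := ‖lam‖⁻¹ with hr
  have hr1 : r < 1 := by
    rw [hr]; exact inv_lt_one_of_one_lt₀ hlam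
  have hrpos : 0 < r := inv_pos.mpr hr0
  set S' : E →L[ℂ] E := lam⁻¹ • S with hS'
  have hSnorm : ‖S'‖ ≤ r := by
    rw [hS', hr]
    calc ‖lam⁻¹ • S‖ ≤ ‖lam⁻¹‖ * ‖S‖ := ContinuousLinearMap.opNorm_smul_le _ _
    _ ≤ ‖lam‖⁻¹ * 1 := by
        rw [norm_inv]
        exact mul_le_mul_of_nonneg_left hSle (by positivity)
    _ = ‖lam‖⁻¹ := mul_one _
  obtain ⟨V, hV1, hV2⟩ := oneSub_inv_exists (A := E →L[ℂ] E)
    ContinuousLinearMap.norm_id_le (-S') (by rw [norm_neg]; exact hSnorm) hrpos.le hr1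
  rw [sub_neg_eq_add] at hV1
  set R : E →L[ℂ] E := S' * V with hR
  have key : (1 + lam • B) * R = 1 := by
    have h2 : (lam • B) * S' = 1 := by
      rw [hS', smul_mul_assoc, mul_smul_comm, smul_smul, mul_inv_cancel₀ hlam0, one_smul, hBS]
    have h1 : (1 + lam • B) * S' = 1 + S' := by
      rw [add_mul, one_mul, h2, add_comm]
    rw [hR, ← mul_assoc, h1, hV1]
  have hRnorm : ‖R‖ ≤ (‖lam‖ - 1)⁻¹ := by
    calc ‖R‖ ≤ ‖S'‖ * ‖V‖ := norm_mul_le _ _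
    _ ≤ r * (1 - r)⁻¹ := mul_le_mul hSnorm hV2 (norm_nonneg _) hrpos.le
    _ = (‖lam‖ - 1)⁻¹ := by
        rw [hr, ← mul_inv]
        congr 1
        rw [mul_sub, mul_one, mul_inv_cancel₀ hr0.ne']
  have keyn : ∀ m : ℕ, (1 + lam • B) ^ m * R ^ m = 1 := by
    intro m
    induction m with
    | zero => simp
    | succ k ih =>
        rw [pow_succ, pow_succ', mul_assoc, ← mul_assoc (1 + lam • B) R, key, one_mul, ih]
  refine ⟨(R ^ n) y, ?_, ?_⟩
  · calc ((1 + lam • B) ^ n) ((R ^ n) y)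
        = (((1 + lam • B) ^ n) * R ^ n) y := rfl
      _ = (1 : E →L[ℂ] E) y := by rw [keyn n]
      _ = y := rfl
  · calc ‖(R ^ n) y‖ ≤ ‖R ^ n‖ * ‖y‖ := ContinuousLinearMap.le_opNorm _ _
    _ ≤ ‖R‖ ^ n * ‖y‖ := mul_le_mul_of_nonneg_right (norm_pow_le' _ hn) (norm_nonneg y)
    _ ≤ ((‖lam‖ - 1)⁻¹) ^ n * ‖y‖ :=
        mul_le_mul_of_nonneg_right (pow_le_pow_left₀ (norm_nonneg R) hRnorm n) (norm_nonneg y)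
    _ = ‖y‖ / (‖lam‖ - 1) ^ n := by rw [inv_pow]; ring

/-- If `|λ| > 1`, then for every `y ∈ l^∞(ℕ)` and every positive integer `n` there is
`w` with `(I + λB)^n w = y` and `‖w‖ ≤ ‖y‖ / (|λ| - 1)^n`. -/
theorem stmt5 (lam : ℂ) (hlam : 1 < ‖lam‖) (y : lp (fun _ : ℕ => ℂ) ∞)
    (n : ℕ) (hn : 0 < n) :
    ∃ w : lp (fun _ : ℕ => ℂ) ∞,
      ((1 + lam • backwardShift) ^ n) w = y ∧ ‖w‖ ≤ ‖y‖ / (‖lam‖ - 1) ^ n :=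
  main_aux backwardShift forwardShift backward_mul_forward forwardShift_norm_le lam hlam y n hn
end

section
/- Let T be a bounded linear operator on a complex Banach space X and suppose there exists a vector x ∈ X such that the extended limit set J_T(x) has nonempty interior. Then for every λ ∈ ℂ with |λ| ≤ 1 the operator T − λI has dense range. -/
open Filter Topology

/-- If some extended limit set `J_T(x)` has nonempty interior, then for every `λ ∈ ℂ`
with `|λ| ≤ 1` the operator `T - λI` has dense range. -/
theorem stmt6 {X : Type*} [NormedAddCommGroup X] [NormedSpace ℂ X] [CompleteSpace X]
    (T : X →L[ℂ] X) (x : X) (hx : (interior (Jset T x)).Nonempty)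
    (lam : ℂ) (hlam : ‖lam‖ ≤ 1) :
    DenseRange ⇑(T - lam • (1 : X →L[ℂ] X)) := by
  set S : X →L[ℂ] X := T - lam • (1 : X →L[ℂ] X) with hS
  by_contra hd
  -- get a point not in the closure of the range
  have : ∃ x₁ : X, x₁ ∉ closure (Set.range ⇑S) := by
    by_contra h
    push_neg at h
    exact hd fun z => h z
  obtain ⟨x₁, hx₁⟩ := this
  -- the closure of the range is a closed convex set
  have hconv : Convex ℝ (Set.range ⇑S) := by
    have : Set.range ⇑S = ((LinearMap.range (S : X →ₗ[ℂ] X)).restrictScalars ℝ : Set X) := by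
      ext z; simp [LinearMap.mem_range]
    rw [this]
    exact Submodule.convex _
  obtain ⟨f, u, hfu, hux⟩ :=
    RCLike.geometric_hahn_banach_closed_point (𝕜 := ℂ) (hconv.closure) isClosed_closure hx₁
  -- `0 < u`
  have h0 : (0 : X) ∈ closure (Set.range ⇑S) :=
    subset_closure ⟨0, map_zero S⟩
  have hu0 : 0 < u := by simpa using hfu 0 h0
  -- f vanishes on the range of S
  have hker : ∀ v : X, f (S v) = 0 := by
    intro v
    by_contra hfa
    set a := S v with ha
    have hmem : ∀ c : ℂ, c • a ∈ closure (Set.range ⇑S) := fun c =>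
      subset_closure ⟨c • v, by simp [ha]⟩
    have := hfu (((u + 1) * (f a)⁻¹) • a) (hmem _)
    rw [map_smul] at this
    have hcalc : (u + 1) * (f a)⁻¹ * f a = (u + 1 : ℝ) := by
      rw [mul_assoc, inv_mul_cancel₀ hfa, mul_one]; push_cast; ring
    rw [smul_eq_mul, hcalc] at this
    simp only [RCLike.re_to_complex, Complex.ofReal_re] at this
    linarith
  -- hence f ∘ T = lam * f
  have hT : ∀ v : X, f (T v) = lam * f v := by
    intro v
    have := hker v
    rw [hS] at this
    simp only [ContinuousLinearMap.sub_apply, ContinuousLinearMap.smul_apply,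
      ContinuousLinearMap.one_apply, map_sub, map_smul, smul_eq_mul] at this
    linear_combination this
  have hTk : ∀ (k : ℕ) (v : X), f ((T ^ k) v) = lam ^ k * f v := by
    intro k
    induction k with
    | zero => intro v; simp
    | succ k ih =>
      intro v
      have h1 : (T ^ (k + 1)) v = (T ^ k) (T v) := by
        rw [pow_succ]; rfl
      rw [h1, ih (T v), hT v, pow_succ]; ring
  -- a ball inside the J-set
  obtain ⟨y₀, hy₀⟩ := hx
  obtain ⟨r, hr, hball⟩ := Metric.isOpen_iff.1 isOpen_interior y₀ hy₀
  have hballJ : Metric.ball y₀ r ⊆ Jset T x := hball.trans interior_subset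
  -- main claim: f = 0, contradicting u < re (f x₁)
  have hf0 : ∀ w : X, f w = 0 := by
    -- first, limit computations on the J-set
    have hlimit : ∀ y ∈ Jset T x, ∃ k : ℕ → ℕ, StrictMono k ∧ ∃ vs : ℕ → X,
        Tendsto vs atTop (𝓝 x) ∧
        Tendsto (fun n => lam ^ (k n) * f (vs n)) atTop (𝓝 (f y)) := by
      rintro y ⟨k, hk, -, vs, hvs, hvy⟩
      refine ⟨k, hk, vs, hvs, ?_⟩
      have h1 : Tendsto (fun n => f ((T ^ (k n)) (vs n))) atTop (𝓝 (f y)) :=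
        (f.continuous.tendsto y).comp hvy
      simpa only [hTk] using h1
    rcases lt_or_eq_of_le hlam with hlt | heq
    · -- case |lam| < 1 : f vanishes on the J-set
      have hz : ∀ y ∈ Jset T x, f y = 0 := by
        intro y hy
        obtain ⟨k, hk, vs, hvs, hlim⟩ := hlimit y hy
        have hpow : Tendsto (fun n => ‖lam‖ ^ (k n)) atTop (𝓝 0) :=
          (tendsto_pow_atTop_nhds_zero_of_lt_one (norm_nonneg _) hlt).comp hk.tendsto_atTop
        have hfv : Tendsto (fun n => ‖f (vs n)‖) atTop (𝓝 ‖f x‖) :=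
          ((f.continuous.tendsto x).comp hvs).norm
        have hnorm : Tendsto (fun n => ‖lam ^ (k n) * f (vs n)‖) atTop (𝓝 0) := by
          have := hpow.mul hfv
          rw [zero_mul] at this
          simpa [norm_mul, norm_pow] using this
        have h0' : Tendsto (fun n => lam ^ (k n) * f (vs n)) atTop (𝓝 0) :=
          tendsto_zero_iff_norm_tendsto_zero.2 hnorm
        exact tendsto_nhds_unique hlim h0'
      intro w
      have hy₀0 : f y₀ = 0 := hz y₀ (hballJ (Metric.mem_ball_self hr))
      set t : ℝ := r / (2 * (‖w‖ + 1)) with ht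
      have htpos : 0 < t := by positivity
      have hmem : y₀ + (t : ℂ) • w ∈ Metric.ball y₀ r := by
        rw [Metric.mem_ball, dist_eq_norm]
        have : ‖y₀ + (t : ℂ) • w - y₀‖ = t * ‖w‖ := by
          simp [norm_smul, abs_of_pos htpos]
        rw [this, ht]
        rw [div_mul_eq_mul_div, div_lt_iff₀ (by positivity)]
        nlinarith [norm_nonneg w]
      have := hz _ (hballJ hmem)
      rw [map_add, map_smul, hy₀0, zero_add, smul_eq_mul] at this
      have htne : (t : ℂ) ≠ 0 := by
        exact_mod_cast ne_of_gt htpos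
      exact (mul_eq_zero.1 this).resolve_left htne
    · -- case |lam| = 1 : ‖f ·‖ is constant on the J-set
      have hc : ∀ y ∈ Jset T x, ‖f y‖ = ‖f x‖ := by
        intro y hy
        obtain ⟨k, hk, vs, hvs, hlim⟩ := hlimit y hy
        have h1 : Tendsto (fun n => ‖lam ^ (k n) * f (vs n)‖) atTop (𝓝 ‖f y‖) := hlim.norm
        have h2 : Tendsto (fun n => ‖lam ^ (k n) * f (vs n)‖) atTop (𝓝 ‖f x‖) := by
          have hfv : Tendsto (fun n => ‖f (vs n)‖) atTop (𝓝 ‖f x‖) :=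
            ((f.continuous.tendsto x).comp hvs).norm
          have : (fun n => ‖lam ^ (k n) * f (vs n)‖) = fun n => ‖f (vs n)‖ := by
            funext n; rw [norm_mul, norm_pow, heq, one_pow, one_mul]
          rwa [this]
        exact tendsto_nhds_unique h1 h2
      intro w
      by_contra hb
      have hy₀c : ‖f y₀‖ = ‖f x‖ := hc y₀ (hballJ (Metric.mem_ball_self hr))
      rcases eq_or_ne (f y₀) 0 with h0' | h0'
      · -- then ‖f x‖ = 0, and along a segment f w = 0
        have hfx0 : ‖f x‖ = 0 := by rw [← hy₀c, h0', norm_zero]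
        set t : ℝ := r / (2 * (‖w‖ + 1)) with ht
        have htpos : 0 < t := by positivity
        have hmem : y₀ + (t : ℂ) • w ∈ Metric.ball y₀ r := by
          rw [Metric.mem_ball, dist_eq_norm]
          have : ‖y₀ + (t : ℂ) • w - y₀‖ = t * ‖w‖ := by
            simp [norm_smul, abs_of_pos htpos]
          rw [this, ht]
          rw [div_mul_eq_mul_div, div_lt_iff₀ (by positivity)]
          nlinarith [norm_nonneg w]
        have h3 : ‖f (y₀ + (t : ℂ) • w)‖ = 0 := by rw [hc _ (hballJ hmem), hfx0]
        rw [norm_eq_zero, map_add, map_smul, h0', zero_add, smul_eq_mul] at h3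
        have htne : (t : ℂ) ≠ 0 := by exact_mod_cast ne_of_gt htpos
        exact hb ((mul_eq_zero.1 h3).resolve_left htne)
      · -- f y₀ ≠ 0 : move in direction aligned with f y₀
        have hfy₀ : 0 < ‖f y₀‖ := norm_pos_iff.2 h0'
        have hfw : 0 < ‖f w‖ := norm_pos_iff.2 hb
        set ε : ℝ := r * ‖f w‖ / (2 * ‖f y₀‖ * (‖w‖ + 1)) with hε
        have hεpos : 0 < ε := by positivity
        set c : ℂ := (ε : ℂ) * f y₀ / f w with hcdef
        have hcnorm : ‖c‖ = ε * ‖f y₀‖ / ‖f w‖ := by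
          rw [hcdef, norm_div, norm_mul, Complex.norm_real, Real.norm_eq_abs,
            abs_of_pos hεpos]
        have hmem : y₀ + c • w ∈ Metric.ball y₀ r := by
          rw [Metric.mem_ball, dist_eq_norm]
          have h4 : ‖y₀ + c • w - y₀‖ = ‖c‖ * ‖w‖ := by simp [norm_smul]
          rw [h4, hcnorm]
          have h8 : ε * ‖f y₀‖ / ‖f w‖ = r / (2 * (‖w‖ + 1)) := by
            rw [hε]
            rw [div_mul_eq_mul_div, div_div, div_eq_div_iff (by positivity) (by positivity)]
            ring
          rw [h8, div_mul_eq_mul_div, div_lt_iff₀ (by positivity)]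
          nlinarith [norm_nonneg w]
        have h5 : f (y₀ + c • w) = ((1 + ε : ℝ) : ℂ) * f y₀ := by
          rw [map_add, map_smul, smul_eq_mul, hcdef]
          field_simp
          push_cast
          ring
        have h6 : ‖f (y₀ + c • w)‖ = ‖f y₀‖ := by rw [hc _ (hballJ hmem), ← hy₀c]
        rw [h5, norm_mul, Complex.norm_real, Real.norm_eq_abs,
          abs_of_pos (by linarith : (0:ℝ) < 1 + ε)] at h6
        nlinarith
  have : f x₁ = 0 := hf0 x₁
  rw [this] at hux
  simp at hux
  linarith
end

section
/- Let T be a bounded linear operator on a complex Banach space X. If T is J-class, i.e. there exists a nonzero x ∈ X with J_T(x) = X, then the spectrum σ(T) intersects the unit circle {z ∈ ℂ : |z| = 1}. -/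
open Filter Topology Metric Finset MeasureTheory

namespace Stmt7Aux

variable {A : Type*} [NormedRing A] [NormedAlgebra ℂ A] [CompleteSpace A]

omit [CompleteSpace A] in
lemma resolvent_mul_pow (T : A) {z : ℂ} (hz : z ∈ resolventSet ℂ T) (n : ℕ) :
    resolvent T z * T ^ n =
      z ^ n • resolvent T z - ∑ i ∈ Finset.range n, z ^ i • T ^ (n - 1 - i) := by
  have hc : Commute (algebraMap ℂ A z) T := Algebra.commutes z T
  have hgeom := hc.mul_geom_sum₂ (n := n)
  have hres : resolvent T z * (algebraMap ℂ A z - T) = 1 :=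
    Ring.inverse_mul_cancel _ hz
  have h1 : resolvent T z * ((algebraMap ℂ A z) ^ n - T ^ n)
      = ∑ i ∈ Finset.range n, (algebraMap ℂ A z) ^ i * T ^ (n - 1 - i) := by
    rw [← hgeom, ← mul_assoc, hres, one_mul]
  have h2 : resolvent T z * T ^ n
      = resolvent T z * (algebraMap ℂ A z) ^ n
        - ∑ i ∈ Finset.range n, (algebraMap ℂ A z) ^ i * T ^ (n - 1 - i) := by
    rw [← h1, mul_sub, sub_sub_cancel]
  rw [h2, ← map_pow, ← Algebra.commutes, ← Algebra.smul_def]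
  congr 1
  refine Finset.sum_congr rfl fun i _ => ?_
  rw [← map_pow, ← Algebra.smul_def]

lemma clm_circleIntegral {E F : Type*} [NormedAddCommGroup E] [NormedSpace ℂ E]
    [NormedAddCommGroup F] [NormedSpace ℂ F] [CompleteSpace E] [CompleteSpace F]
    (L : E →L[ℂ] F) {f : ℂ → E} {c : ℂ} {R : ℝ}
    (hf : Continuous fun θ : ℝ => f (circleMap c R θ)) :
    L (∮ z in C(c, R), f z) = ∮ z in C(c, R), L (f z) := by
  have hint : IntervalIntegrable
      (fun θ : ℝ => deriv (circleMap c R) θ • f (circleMap c R θ)) volume 0 (2 * Real.pi) := by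
    apply Continuous.intervalIntegrable
    simp only [deriv_circleMap]
    exact ((continuous_circleMap 0 R).mul continuous_const).smul hf
  simp only [circleIntegral]
  rw [← L.intervalIntegral_comp_comm hint]
  simp [_root_.map_smul]

lemma circleIntegral_sum {E : Type*} [NormedAddCommGroup E] [NormedSpace ℂ E]
    {ι : Type*} (s : Finset ι) (g : ι → ℂ → E) {c : ℂ} {R : ℝ}
    (hg : ∀ i ∈ s, Continuous fun θ : ℝ => g i (circleMap c R θ)) :
    (∮ z in C(c, R), ∑ i ∈ s, g i z) = ∑ i ∈ s, ∮ z in C(c, R), g i z := by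
  simp only [circleIntegral, smul_sum]
  rw [intervalIntegral.integral_finset_sum]
  intro i hi
  apply Continuous.intervalIntegrable
  simp only [deriv_circleMap]
  exact ((continuous_circleMap 0 R).mul continuous_const).smul (hg i hi)

lemma circleIntegral_zpow_smul {E : Type*} [NormedAddCommGroup E] [NormedSpace ℂ E]
    [CompleteSpace E] (m : ℤ) (v : E) {R : ℝ} (hR : 0 < R) :
    (∮ z in C(0, R), (z ^ m : ℂ) • v)
      = (if m = -1 then (2 * (Real.pi : ℂ) * Complex.I) else 0) • v := by
  rw [circleIntegral.integral_smul_const]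
  congr 1
  split_ifs with h
  · subst h
    have := circleIntegral.integral_sub_inv_of_mem_ball (Metric.mem_ball_self hR (x := (0:ℂ)))
    simpa [zpow_neg_one] using this
  · simpa using circleIntegral.integral_sub_zpow_of_ne h 0 0 R

lemma key_integral (T : A) {r₁ r₂ : ℝ} (h0 : 0 < r₁)
    (ann : ∀ z : ℂ, r₁ ≤ ‖z‖ → ‖z‖ ≤ r₂ → z ∈ resolventSet ℂ T)
    {ρ : ℝ} (hρ1 : r₁ ≤ ρ) (hρ2 : ρ ≤ r₂) (m : ℤ) (n : ℕ) :
    (∮ z in C(0, ρ), z ^ m • resolvent T z) * T ^ n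
      = (∮ z in C(0, ρ), z ^ (m + n) • resolvent T z)
        - ∑ i ∈ Finset.range n,
            (if m + (i : ℤ) = -1 then (2 * (Real.pi : ℂ) * Complex.I) else 0) • T ^ (n - 1 - i) := by
  have hρ0 : 0 < ρ := lt_of_lt_of_le h0 hρ1
  have hsph : ∀ θ : ℝ, circleMap 0 ρ θ ∈ resolventSet ℂ T := by
    intro θ
    have hn : ‖circleMap 0 ρ θ‖ = ρ := by
      simpa [abs_of_pos hρ0] using Complex.abs_circleMap_zero ρ θ
    exact ann _ (by rw [hn]; exact hρ1) (by rw [hn]; exact hρ2)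
  have hz0 : ∀ θ : ℝ, circleMap 0 ρ θ ≠ 0 := fun θ => circleMap_ne_center hρ0.ne'
  have hcont : Continuous fun θ : ℝ => resolvent T (circleMap 0 ρ θ) := by
    rw [continuous_iff_continuousAt]
    intro θ
    exact ((spectrum.hasDerivAt_resolvent (hsph θ)).differentiableAt.continuousAt).comp
      (continuous_circleMap 0 ρ).continuousAt
  have hcontm : ∀ j : ℤ, Continuous fun θ : ℝ =>
      (circleMap 0 ρ θ) ^ j • resolvent T (circleMap 0 ρ θ) := fun j =>
    ((continuous_circleMap 0 ρ).zpow₀ j (fun θ => Or.inl (hz0 θ))).smul hcont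
  have step1 : (∮ z in C(0, ρ), z ^ m • resolvent T z) * T ^ n
      = ∮ z in C(0, ρ), (z ^ m • resolvent T z) * T ^ n := by
    have := clm_circleIntegral (f := fun z : ℂ => z ^ m • resolvent T z)
      ((ContinuousLinearMap.mul ℂ A).flip (T ^ n)) (hcontm m)
    simpa using this
  have hmem : ∀ z ∈ sphere (0:ℂ) ρ, z ∈ resolventSet ℂ T ∧ z ≠ 0 := by
    intro z hz
    have hn : ‖z‖ = ρ := by simpa using hz
    exact ⟨ann z (by rw [hn]; exact hρ1) (by rw [hn]; exact hρ2), by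
      intro h; rw [h, norm_zero] at hn; exact hρ0.ne' hn.symm⟩
  have step2 : (∮ z in C(0, ρ), (z ^ m • resolvent T z) * T ^ n)
      = ∮ z in C(0, ρ), (z ^ (m + n) • resolvent T z
          - ∑ i ∈ Finset.range n, z ^ (m + (i : ℤ)) • T ^ (n - 1 - i)) := by
    apply circleIntegral.integral_congr hρ0.le
    intro z hz
    obtain ⟨hres, hz0'⟩ := hmem z hz
    dsimp only
    rw [smul_mul_assoc, resolvent_mul_pow T hres n, smul_sub, Finset.smul_sum]
    congr 1
    · rw [smul_smul, ← zpow_natCast z n, ← zpow_add₀ hz0']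
    · exact Finset.sum_congr rfl fun i _ => by
        rw [smul_smul, ← zpow_natCast z i, ← zpow_add₀ hz0']
  have hint1 : CircleIntegrable (fun z : ℂ => z ^ (m + n) • resolvent T z) 0 ρ :=
    (hcontm (m + n)).intervalIntegrable _ _
  have hint2 : CircleIntegrable
      (fun z : ℂ => ∑ i ∈ Finset.range n, z ^ (m + (i : ℤ)) • T ^ (n - 1 - i)) 0 ρ := by
    apply Continuous.intervalIntegrable
    apply continuous_finset_sum
    intro i _
    exact (((continuous_circleMap 0 ρ).zpow₀ _ (fun θ => Or.inl (hz0 θ))).smul continuous_const)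
  have step3 : (∮ z in C(0, ρ), (z ^ (m + n) • resolvent T z
          - ∑ i ∈ Finset.range n, z ^ (m + (i : ℤ)) • T ^ (n - 1 - i)))
      = (∮ z in C(0, ρ), z ^ (m + n) • resolvent T z)
        - ∮ z in C(0, ρ), ∑ i ∈ Finset.range n, z ^ (m + (i : ℤ)) • T ^ (n - 1 - i) :=
    circleIntegral.integral_sub hint1 hint2
  have step4 : (∮ z in C(0, ρ), ∑ i ∈ Finset.range n, z ^ (m + (i : ℤ)) • T ^ (n - 1 - i))
      = ∑ i ∈ Finset.range n,
          (if m + (i : ℤ) = -1 then (2 * (Real.pi : ℂ) * Complex.I) else 0) • T ^ (n - 1 - i) := by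
    rw [circleIntegral_sum]
    · exact Finset.sum_congr rfl fun i _ => circleIntegral_zpow_smul _ _ hρ0
    · intro i _
      exact (((continuous_circleMap 0 ρ).zpow₀ _ (fun θ => Or.inl (hz0 θ))).smul continuous_const)
  rw [step1, step2, step3, step4]

end Stmt7Aux

open Filter Topology

/-- If `T` is a `J`-class operator (there exists a nonzero `x` with `J_T(x) = X`), then
the spectrum of `T` intersects the unit circle. -/
theorem stmt7 {X : Type*} [NormedAddCommGroup X] [NormedSpace ℂ X] [CompleteSpace X]
    (T : X →L[ℂ] X) (hT : ∃ x : X, x ≠ 0 ∧ Jset T x = Set.univ) :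
    ∃ z ∈ spectrum ℂ T, ‖z‖ = 1 := by
  by_contra hcon
  push_neg at hcon
  obtain ⟨x, hx0, hJ⟩ := hT
  -- annulus free of spectrum
  have hsub : Metric.sphere (0:ℂ) 1 ⊆ (spectrum ℂ T)ᶜ := by
    intro z hz hzs
    exact hcon z hzs (by simpa using hz)
  obtain ⟨δ₀, hδ₀, hthick⟩ := (isCompact_sphere (0:ℂ) 1).exists_cthickening_subset_open
    (spectrum.isClosed T).isOpen_compl hsub
  set ε : ℝ := min δ₀ (1/2) with hεdef
  have hε0 : 0 < ε := lt_min hδ₀ (by norm_num)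
  have hεh : ε ≤ 1/2 := min_le_right _ _
  set r₁ : ℝ := 1 - ε with hr₁def
  set r₂ : ℝ := 1 + ε with hr₂def
  have h01 : 0 < r₁ := by rw [hr₁def]; linarith
  have h12 : r₁ ≤ r₂ := by rw [hr₁def, hr₂def]; linarith
  have hr1lt : r₁ < 1 := by rw [hr₁def]; linarith
  have hr2gt : 1 < r₂ := by rw [hr₂def]; linarith
  have ann : ∀ z : ℂ, r₁ ≤ ‖z‖ → ‖z‖ ≤ r₂ → z ∈ resolventSet ℂ T := by
    intro z h1 h2
    have hzpos : 0 < ‖z‖ := lt_of_lt_of_le h01 h1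
    have hz0 : z ≠ 0 := norm_pos_iff.mp hzpos
    have hw : ((‖z‖⁻¹ : ℝ) • z) ∈ Metric.sphere (0:ℂ) 1 := by
      rw [mem_sphere_zero_iff_norm, norm_smul, Real.norm_eq_abs,
        abs_of_pos (inv_pos.mpr hzpos), inv_mul_cancel₀ hzpos.ne']
    have hd : dist z ((‖z‖⁻¹ : ℝ) • z) ≤ δ₀ := by
      rw [dist_eq_norm]
      have e1 : z - (‖z‖⁻¹ : ℝ) • z = ((1 - ‖z‖⁻¹ : ℝ)) • z := by
        rw [sub_smul, one_smul]
      rw [e1, norm_smul, Real.norm_eq_abs]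
      have e2 : |1 - ‖z‖⁻¹| * ‖z‖ = |‖z‖ - 1| := by
        have e3 : (1 - ‖z‖⁻¹) * ‖z‖ = ‖z‖ - 1 := by
          rw [sub_mul, one_mul, inv_mul_cancel₀ hzpos.ne']
        calc |1 - ‖z‖⁻¹| * ‖z‖ = |1 - ‖z‖⁻¹| * |‖z‖| := by rw [abs_of_pos hzpos]
          _ = |(1 - ‖z‖⁻¹) * ‖z‖| := (abs_mul _ _).symm
          _ = |‖z‖ - 1| := by rw [e3]
      rw [e2]
      have h3 : |‖z‖ - 1| ≤ ε := by
        rw [hr₁def] at h1; rw [hr₂def] at h2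
        exact abs_le.mpr ⟨by linarith, by linarith⟩
      exact h3.trans (min_le_left _ _)
    have hmem : z ∈ Metric.cthickening δ₀ (Metric.sphere (0:ℂ) 1) :=
      Metric.mem_cthickening_of_dist_le z _ δ₀ _ hw hd
    have hcompl := hthick hmem
    by_contra h'
    exact hcompl h'
  have hdiff : ∀ z : ℂ, r₁ ≤ ‖z‖ → ‖z‖ ≤ r₂ → DifferentiableAt ℂ (resolvent T) z :=
    fun z hz1 hz2 => (spectrum.hasDerivAt_resolvent (ann z hz1 hz2)).differentiableAt
  -- Cauchy's theorem for the annulus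
  have hcauchy : (∮ z in C(0, r₂), resolvent T z) = ∮ z in C(0, r₁), resolvent T z := by
    apply Complex.circleIntegral_eq_of_differentiable_on_annulus_off_countable h01 h12
      Set.countable_empty
    · intro z hz
      exact (hdiff z (not_lt.mp (fun h => hz.2 (mem_ball_zero_iff.mpr h)))
        (mem_closedBall_zero_iff.mp hz.1)).continuousAt.continuousWithinAt
    · intro z hz
      exact hdiff z (le_of_lt (lt_of_not_ge (fun h => hz.1.2 (mem_closedBall_zero_iff.mpr h))))
        (le_of_lt (mem_ball_zero_iff.mp hz.1.1))
  -- bounds on the resolvent over circles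
  have hboundEx : ∀ ρ : ℝ, r₁ ≤ ρ → ρ ≤ r₂ → ∃ M : ℝ, 0 ≤ M ∧
      ∀ z ∈ Metric.sphere (0:ℂ) ρ, ‖resolvent T z‖ ≤ M := by
    intro ρ hρ1 hρ2
    obtain ⟨M, hM⟩ := (isCompact_sphere (0:ℂ) ρ).exists_bound_of_continuousOn
      (f := resolvent T) (fun z hz => by
        have hn : ‖z‖ = ρ := mem_sphere_zero_iff_norm.mp hz
        exact (hdiff z (by rw [hn]; exact hρ1)
          (by rw [hn]; exact hρ2)).continuousAt.continuousWithinAt)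
    exact ⟨max M 0, le_max_right _ _, fun z hz => (hM z hz).trans (le_max_left _ _)⟩
  obtain ⟨M₁, hM₁0, hM₁⟩ := hboundEx r₁ le_rfl h12
  obtain ⟨M₂, hM₂0, hM₂⟩ := hboundEx r₂ h12 le_rfl
  have normJ : ∀ (ρ : ℝ), r₁ ≤ ρ → ρ ≤ r₂ → ∀ (M : ℝ), 0 ≤ M →
      (∀ z ∈ Metric.sphere (0:ℂ) ρ, ‖resolvent T z‖ ≤ M) → ∀ m : ℤ,
      ‖∮ z in C(0, ρ), (z:ℂ) ^ m • resolvent T z‖ ≤ 2 * Real.pi * ρ * (ρ ^ m * M) := by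
    intro ρ hρ1 hρ2 M hM0 hM m
    have hρ0 : 0 < ρ := lt_of_lt_of_le h01 hρ1
    have hb := circleIntegral.norm_integral_le_of_norm_le_const (c := (0:ℂ))
      (f := fun z : ℂ => z ^ m • resolvent T z) (C := ρ ^ m * M) hρ0.le ?_
    · simpa [abs_of_pos hρ0] using hb
    · intro z hz
      have hn : ‖z‖ = ρ := mem_sphere_zero_iff_norm.mp hz
      show ‖z ^ m • resolvent T z‖ ≤ ρ ^ m * M
      refine le_trans (ContinuousLinearMap.opNorm_smul_le _ _) ?_
      rw [norm_zpow, hn]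
      exact mul_le_mul_of_nonneg_left (hM z hz) (zpow_nonneg hρ0.le m)
  -- the "inner" Riesz-type integral
  set P : X →L[ℂ] X := ∮ z in C(0, r₁), resolvent T z with hPdef
  have hPn : ∀ n : ℕ, P * T ^ n = ∮ z in C(0, r₁), (z:ℂ) ^ (n:ℤ) • resolvent T z := by
    intro n
    have hk := Stmt7Aux.key_integral T h01 ann le_rfl h12 0 n
    rw [Finset.sum_eq_zero (fun i hi => by rw [if_neg (by omega), zero_smul]), sub_zero] at hk
    simp only [zero_add] at hk
    rw [← hk]
    congr 1
    rw [hPdef]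
    apply circleIntegral.integral_congr h01.le
    intro z hz
    simp
  have hSn : ∀ n : ℕ, 0 < n →
      (∮ z in C(0, r₂), (z:ℂ) ^ (-(n:ℤ)) • resolvent T z) * T ^ n
        = P - (2 * (Real.pi:ℂ) * Complex.I) • 1 := by
    intro n hn
    have hk := Stmt7Aux.key_integral T h01 ann h12 le_rfl (-(n:ℤ)) n
    have hsum : (∑ i ∈ Finset.range n,
        (if -(n:ℤ) + (i:ℤ) = -1 then (2 * (Real.pi:ℂ) * Complex.I) else 0) • T ^ (n-1-i))
        = (2 * (Real.pi:ℂ) * Complex.I) • (1 : X →L[ℂ] X) := by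
      rw [Finset.sum_eq_single (n-1)]
      · rw [if_pos (by omega)]
        simp [Nat.sub_self]
      · intro i hi hne
        have := Finset.mem_range.mp hi
        rw [if_neg (by omega), zero_smul]
      · intro hmem
        exact absurd (Finset.mem_range.mpr (by omega)) hmem
    rw [hk, hsum]
    congr 1
    have hexp : -(n:ℤ) + (n:ℤ) = 0 := by omega
    rw [hexp]
    calc (∮ z in C(0, r₂), (z:ℂ) ^ (0:ℤ) • resolvent T z)
        = ∮ z in C(0, r₂), resolvent T z := by
          apply circleIntegral.integral_congr (lt_of_lt_of_le h01 h12).le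
          intro z hz
          simp
      _ = P := hcauchy
  -- Step 1 : P = 0
  have hr1small : Tendsto (fun n : ℕ => r₁ ^ n) atTop (𝓝 0) :=
    tendsto_pow_atTop_nhds_zero_of_lt_one h01.le hr1lt
  have hP0 : ∀ v : X, P v = 0 := by
    intro y
    have hy : y ∈ Jset T x := by rw [hJ]; trivial
    obtain ⟨k, hk, hkpos, u, hu, huy⟩ := hy
    have hklim : Tendsto (fun n => r₁ ^ k n) atTop (𝓝 0) := hr1small.comp hk.tendsto_atTop
    have h2 : Tendsto (fun n => P ((T ^ k n) (u n))) atTop (𝓝 0) := by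
      rw [tendsto_zero_iff_norm_tendsto_zero]
      have hbd : ∀ n, ‖P ((T ^ k n) (u n))‖
          ≤ (2 * Real.pi * r₁ * M₁ * r₁ ^ k n) * ‖u n‖ := by
        intro n
        have he : P ((T ^ k n) (u n)) = (P * T ^ k n) (u n) := rfl
        rw [he]
        refine le_trans ((P * T ^ k n).le_opNorm (u n)) ?_
        apply mul_le_mul_of_nonneg_right _ (norm_nonneg _)
        rw [hPn (k n)]
        refine le_trans (normJ r₁ le_rfl h12 M₁ hM₁0 hM₁ (k n)) ?_
        exact le_of_eq (by rw [zpow_natCast]; ring)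
      refine squeeze_zero (fun n => norm_nonneg _) hbd ?_
      have hten : Tendsto (fun n => (2*Real.pi*r₁*M₁ * r₁ ^ k n) * ‖u n‖) atTop
          (𝓝 ((2*Real.pi*r₁*M₁ * 0) * ‖x‖)) :=
        (tendsto_const_nhds.mul hklim).mul hu.norm
      simpa using hten
    have h1 : Tendsto (fun n => P ((T ^ k n) (u n))) atTop (𝓝 (P y)) :=
      (P.continuous.tendsto y).comp huy
    exact tendsto_nhds_unique h1 h2
  -- Step 2 : conclude x = 0
  have hy0 : (0:X) ∈ Jset T x := by rw [hJ]; trivial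
  obtain ⟨k, hk, hkpos, u, hu, hu0⟩ := hy0
  set c : ℂ := 2 * (Real.pi:ℂ) * Complex.I with hcdef
  have hc0 : c ≠ 0 := by
    rw [hcdef]
    exact mul_ne_zero (mul_ne_zero two_ne_zero
      (Complex.ofReal_ne_zero.mpr Real.pi_ne_zero)) Complex.I_ne_zero
  have hSbound : ∀ m : ℕ,
      ‖∮ z in C(0, r₂), (z:ℂ) ^ (-(m:ℤ)) • resolvent T z‖ ≤ 2*Real.pi*r₂*M₂ := by
    intro m
    refine le_trans (normJ r₂ h12 le_rfl M₂ hM₂0 hM₂ (-(m:ℤ))) ?_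
    have hr2pos : (0:ℝ) < r₂ := lt_of_lt_of_le h01 h12
    have h1 : r₂ ^ (-(m:ℤ)) ≤ 1 := by
      rw [zpow_neg, zpow_natCast]
      exact inv_le_one_of_one_le₀ (one_le_pow₀ hr2gt.le)
    have h2 : r₂ ^ (-(m:ℤ)) * M₂ ≤ 1 * M₂ := mul_le_mul_of_nonneg_right h1 hM₂0
    calc 2*Real.pi*r₂*(r₂ ^ (-(m:ℤ)) * M₂) ≤ 2*Real.pi*r₂*(1*M₂) := by
          apply mul_le_mul_of_nonneg_left h2
          positivity
      _ = 2*Real.pi*r₂*M₂ := by ring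
  have key2 : ∀ n, c • u n
      = - (∮ z in C(0, r₂), (z:ℂ) ^ (-((k n : ℕ)):ℤ) • resolvent T z) ((T ^ k n) (u n)) := by
    intro n
    have h := hSn (k n) (hkpos n)
    have happ := congrArg (fun S : X →L[ℂ] X => S (u n)) h
    simp only [ContinuousLinearMap.mul_apply, ContinuousLinearMap.sub_apply,
      ContinuousLinearMap.smul_apply, ContinuousLinearMap.one_apply] at happ
    rw [hP0 (u n), zero_sub] at happ
    rw [happ, neg_neg]
  have hnorm : Tendsto (fun n => ‖c • u n‖) atTop (𝓝 0) := by
    have hbd : ∀ n, ‖c • u n‖ ≤ (2*Real.pi*r₂*M₂) * ‖(T ^ k n) (u n)‖ := by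
      intro n
      rw [key2 n, norm_neg]
      exact le_trans (ContinuousLinearMap.le_opNorm _ _)
        (mul_le_mul_of_nonneg_right (hSbound (k n)) (norm_nonneg _))
    refine squeeze_zero (fun n => norm_nonneg _) hbd ?_
    have hten : Tendsto (fun n => (2*Real.pi*r₂*M₂) * ‖(T ^ k n) (u n)‖) atTop
        (𝓝 ((2*Real.pi*r₂*M₂) * ‖(0:X)‖)) := tendsto_const_nhds.mul hu0.norm
    simpa using hten
  have hulim : Tendsto u atTop (𝓝 0) := by
    rw [tendsto_zero_iff_norm_tendsto_zero]
    have heq : ∀ n, ‖u n‖ = ‖c‖⁻¹ * ‖c • u n‖ := by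
      intro n
      rw [norm_smul, ← mul_assoc, inv_mul_cancel₀ (norm_ne_zero_iff.mpr hc0), one_mul]
    have h2 := hnorm.const_mul ‖c‖⁻¹
    rw [mul_zero] at h2
    exact h2.congr (fun n => (heq n).symm)
  exact hx0 (tendsto_nhds_unique hu hulim)
end

section
/- Let B be the unweighted backward shift on l^∞(ℕ) and let λ ∈ ℂ with |λ| = 1. Then the operator I+λB : l^∞(ℕ) → l^∞(ℕ) does not have dense range; in fact, for the vector y = (y_n) with y_n = (−λ)^{−n}, no point of the open ball of radius 1/2 centered at y belongs to the range of I+λB. -/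
open Filter Topology
open scoped ENNReal

/-- If `|λ| = 1`, then `I + λB` does not have dense range on `l^∞(ℕ)`; in fact, no
point of the open ball of radius `1/2` around the vector `y = ((-λ)^{-n})_{n ≥ 1}`
belongs to the range of `I + λB`. -/
theorem stmt12 (lam : ℂ) (hlam : ‖lam‖ = 1) :
    ¬ DenseRange ⇑(1 + lam • backwardShift) ∧
    ∃ y : lp (fun _ : ℕ => ℂ) ∞, (∀ n : ℕ, y n = (-lam) ^ (-(n : ℤ) - 1)) ∧
      ∀ w : lp (fun _ : ℕ => ℂ) ∞, ‖w - y‖ < 1 / 2 →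
        w ∉ Set.range ⇑(1 + lam • backwardShift) := by
  have hlam0 : lam ≠ 0 := by
    intro h; rw [h, norm_zero] at hlam; norm_num at hlam
  have hneg0 : (-lam) ≠ 0 := neg_ne_zero.mpr hlam0
  have hneg : ‖-lam‖ = 1 := by rwa [norm_neg]
  have hy_mem : Memℓp (fun n : ℕ => (-lam) ^ (-(n : ℤ) - 1)) ∞ := by
    apply memℓp_infty
    refine ⟨1, ?_⟩
    rintro r ⟨n, rfl⟩
    simp [norm_zpow, hneg]
  set y : lp (fun _ : ℕ => ℂ) ∞ := ⟨_, hy_mem⟩ with hy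
  have hyn : ∀ n : ℕ, y n = (-lam) ^ (-(n : ℤ) - 1) := fun n => rfl
  have key : ∀ w : lp (fun _ : ℕ => ℂ) ∞, ‖w - y‖ < 1 / 2 →
      w ∉ Set.range ⇑(1 + lam • backwardShift) := by
    rintro w hw ⟨x, hx⟩
    have hwn : ∀ n : ℕ, w n = x n + lam * x (n + 1) := by
      intro n
      rw [← hx, ContinuousLinearMap.add_apply, ContinuousLinearMap.one_apply,
        ContinuousLinearMap.smul_apply]
      simp only [lp.coeFn_add, Pi.add_apply, lp.coeFn_smul, Pi.smul_apply, smul_eq_mul]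
      rfl
    set ε := ‖w - y‖ with hε
    set z : ℕ → ℂ := fun n => (-lam) ^ n * x n with hz
    have ht : ∀ n : ℕ, ‖z n - z (n + 1) - (-lam)⁻¹‖ ≤ ε := by
      intro n
      have h1 : z n - z (n + 1) - (-lam)⁻¹ = (-lam) ^ n * (w n - y n) := by
        rw [hwn n, hyn n]
        have h2 : (-lam) ^ n * (-lam) ^ (-(n : ℤ) - 1) = (-lam)⁻¹ := by
          rw [← zpow_natCast (-lam) n, ← zpow_add₀ hneg0]
          have : (n : ℤ) + (-(n : ℤ) - 1) = -1 := by ring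
          rw [this, zpow_neg_one]
        have h3 : z (n + 1) = -((-lam) ^ n * (lam * x (n + 1))) := by
          simp only [hz, pow_succ]
          ring
        rw [mul_sub, mul_add, h2, h3]
        ring
      rw [h1, norm_mul, norm_pow, hneg, one_pow, one_mul]
      have h6 := lp.norm_apply_le_norm ENNReal.top_ne_zero (w - y) n
      have hsub : (w - y) n = w n - y n := by
        simp only [lp.coeFn_sub, Pi.sub_apply]
      rw [← hsub]
      exact h6
    have hzb : ∀ n : ℕ, ‖z n‖ ≤ ‖x‖ := by
      intro n
      rw [hz]
      simp only [norm_mul, norm_pow, hneg, one_pow, one_mul]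
      exact lp.norm_apply_le_norm ENNReal.top_ne_zero x n
    -- telescoping
    have hN : ∀ N : ℕ, (N : ℝ) ≤ 2 * ‖x‖ + N * ε := by
      intro N
      have hsum : ∑ n ∈ Finset.range N, (z n - z (n + 1) - (-lam)⁻¹)
          = (z 0 - z N) - (N : ℂ) * (-lam)⁻¹ := by
        rw [Finset.sum_sub_distrib, Finset.sum_range_sub' z, Finset.sum_const,
          Finset.card_range, nsmul_eq_mul]
      have h4 : ‖(N : ℂ) * (-lam)⁻¹‖ ≤ ‖z 0 - z N‖ + ‖∑ n ∈ Finset.range N, (z n - z (n + 1) - (-lam)⁻¹)‖ := by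
        rw [hsum]
        have := norm_sub_norm_le (z 0 - z N) ((z 0 - z N) - (N : ℂ) * (-lam)⁻¹)
        have h5 : (z 0 - z N) - ((z 0 - z N) - (N : ℂ) * (-lam)⁻¹) = (N : ℂ) * (-lam)⁻¹ := by ring
        calc ‖(N : ℂ) * (-lam)⁻¹‖ = ‖(z 0 - z N) - ((z 0 - z N) - (N : ℂ) * (-lam)⁻¹)‖ := by rw [h5]
          _ ≤ ‖z 0 - z N‖ + ‖(z 0 - z N) - (N : ℂ) * (-lam)⁻¹‖ := norm_sub_le _ _
      have h6 : ‖(N : ℂ) * (-lam)⁻¹‖ = (N : ℝ) := by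
        rw [norm_mul, norm_inv, hneg]
        simp
      have h7 : ‖∑ n ∈ Finset.range N, (z n - z (n + 1) - (-lam)⁻¹)‖ ≤ N * ε := by
        calc ‖∑ n ∈ Finset.range N, (z n - z (n + 1) - (-lam)⁻¹)‖
            ≤ ∑ n ∈ Finset.range N, ‖z n - z (n + 1) - (-lam)⁻¹‖ := norm_sum_le _ _
          _ ≤ ∑ _n ∈ Finset.range N, ε := Finset.sum_le_sum (fun n _ => ht n)
          _ = N * ε := by rw [Finset.sum_const, Finset.card_range, nsmul_eq_mul]
      have h8 : ‖z 0 - z N‖ ≤ 2 * ‖x‖ := by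
        calc ‖z 0 - z N‖ ≤ ‖z 0‖ + ‖z N‖ := norm_sub_le _ _
          _ ≤ ‖x‖ + ‖x‖ := add_le_add (hzb 0) (hzb N)
          _ = 2 * ‖x‖ := by ring
      linarith [h4, h6 ▸ h4]
    have hε2 : ε < 1 / 2 := hw
    obtain ⟨N, hN2⟩ := exists_nat_gt (2 * ‖x‖ / (1 - ε))
    have hε1 : (0 : ℝ) < 1 - ε := by linarith
    have := hN N
    have h9 : (N : ℝ) * (1 - ε) ≤ 2 * ‖x‖ := by nlinarith
    have h10 : 2 * ‖x‖ / (1 - ε) < N := hN2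
    rw [div_lt_iff₀ hε1] at h10
    linarith
  refine ⟨?_, y, hyn, key⟩
  intro hdense
  obtain ⟨a, ha⟩ := hdense.exists_dist_lt y (by norm_num : (0 : ℝ) < 1 / 2)
  exact key _ (by rw [← dist_eq_norm, dist_comm]; exact ha) ⟨a, rfl⟩
end

section
/- Let B be the unweighted backward shift on l^∞(ℕ), let n be a positive integer, let z₁, …, z_n ∈ ℂ with |z_k| < 1 for every k, and let R₁ > 0. Then for every y ∈ l^∞(ℕ) there exists x ∈ l^∞(ℕ) such that R₁·(B − z₁I)(B − z₂I)⋯(B − z_nI)x = y and ‖x‖_∞ ≤ ‖y‖_∞ / (R₁ · ∏_{k=1}^{n} (1 − |z_k|)). -/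
open Filter Topology
open scoped ENNReal

set_option synthInstance.maxHeartbeats 1000000
set_option maxHeartbeats 1000000

lemma single_factor (w : ℂ) (hw : ‖w‖ < 1) (y : lp (fun _ : ℕ => ℂ) ∞) :
    ∃ x : lp (fun _ : ℕ => ℂ) ∞,
      (backwardShift - w • (1 : lp (fun _ : ℕ => ℂ) ∞ →L[ℂ] lp (fun _ : ℕ => ℂ) ∞)) x = y ∧
      ‖x‖ ≤ (1 - ‖w‖)⁻¹ * ‖y‖ := by
  have hpos : 0 < 1 - ‖w‖ := by linarith
  set f : ℕ → ℂ := fun m => match m with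
    | 0 => 0
    | m + 1 => ∑ j ∈ Finset.range (m + 1), w ^ j * y (m - j) with hf
  have hbound : ∀ m, ‖f m‖ ≤ (1 - ‖w‖)⁻¹ * ‖y‖ := by
    intro m
    match m with
    | 0 => simpa [hf] using mul_nonneg (le_of_lt (inv_pos.mpr hpos)) (norm_nonneg y)
    | m + 1 =>
      calc ‖f (m+1)‖ ≤ ∑ j ∈ Finset.range (m + 1), ‖w ^ j * y (m - j)‖ :=
            norm_sum_le _ _
        _ ≤ ∑ j ∈ Finset.range (m + 1), ‖w‖ ^ j * ‖y‖ := by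
            apply Finset.sum_le_sum
            intro j _
            rw [norm_mul, norm_pow]
            exact mul_le_mul_of_nonneg_left
              (lp.norm_apply_le_norm ENNReal.top_ne_zero y (m - j))
              (pow_nonneg (norm_nonneg w) j)
        _ = (∑ j ∈ Finset.range (m + 1), ‖w‖ ^ j) * ‖y‖ := by
            rw [Finset.sum_mul]
        _ ≤ (1 - ‖w‖)⁻¹ * ‖y‖ := by
            apply mul_le_mul_of_nonneg_right _ (norm_nonneg y)
            have := Summable.sum_le_tsum (Finset.range (m + 1))
              (fun i _ => pow_nonneg (norm_nonneg w) i)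
              (summable_geometric_of_lt_one (norm_nonneg w) hw)
            rwa [tsum_geometric_of_lt_one (norm_nonneg w) hw] at this
  refine ⟨⟨f, memℓp_infty ⟨(1 - ‖w‖)⁻¹ * ‖y‖, ?_⟩⟩, ?_, ?_⟩
  · rintro r ⟨m, rfl⟩; exact hbound m
  · ext m
    have hcoe : ∀ i, ((backwardShift - w • (1 : lp (fun _ : ℕ => ℂ) ∞ →L[ℂ] lp (fun _ : ℕ => ℂ) ∞))
        (⟨f, memℓp_infty ⟨(1 - ‖w‖)⁻¹ * ‖y‖, by rintro r ⟨m, rfl⟩; exact hbound m⟩⟩ :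
          lp (fun _ : ℕ => ℂ) ∞)) i = f (i + 1) - w * f i := by
      intro i
      simp [ContinuousLinearMap.sub_apply, ContinuousLinearMap.smul_apply,
        ContinuousLinearMap.one_apply, lp.coeFn_sub, lp.coeFn_smul, backwardShift,
        LinearMap.mkContinuous_apply]
      rfl
    rw [hcoe m]
    match m with
    | 0 => simp [hf]
    | m + 1 =>
      show (∑ j ∈ Finset.range (m + 2), w ^ j * y (m + 1 - j))
        - w * ∑ j ∈ Finset.range (m + 1), w ^ j * y (m - j) = y (m + 1)
      rw [Finset.sum_range_succ' (fun j => w ^ j * y (m + 1 - j)) (m + 1)]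
      have hsum : ∑ j ∈ Finset.range (m+1), w ^ (j+1) * y (m + 1 - (j+1))
          = w * ∑ j ∈ Finset.range (m+1), w ^ j * y (m - j) := by
        rw [Finset.mul_sum]
        apply Finset.sum_congr rfl
        intro j _
        rw [Nat.succ_sub_succ, pow_succ]
        ring
      rw [hsum]
      simp
  · apply lp.norm_le_of_forall_le (mul_nonneg (le_of_lt (inv_pos.mpr hpos)) (norm_nonneg y))
    exact hbound

lemma list_factor (L : List ℂ) (hL : ∀ w ∈ L, ‖w‖ < 1) (y : lp (fun _ : ℕ => ℂ) ∞) :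
    ∃ x : lp (fun _ : ℕ => ℂ) ∞,
      (L.map fun w => backwardShift -
        w • (1 : lp (fun _ : ℕ => ℂ) ∞ →L[ℂ] lp (fun _ : ℕ => ℂ) ∞)).prod x = y ∧
      ‖x‖ ≤ ((L.map fun w => 1 - ‖w‖).prod)⁻¹ * ‖y‖ := by
  induction L generalizing y with
  | nil =>
      exact ⟨y, by simp, by simp⟩
  | cons w L ih =>
      have hw : ‖w‖ < 1 := hL w List.mem_cons_self
      have hPL : 0 < (L.map fun w => 1 - ‖w‖).prod := by
        apply List.prod_pos
        intro a ha
        obtain ⟨b, hb, rfl⟩ := List.mem_map.mp ha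
        have := hL b (List.mem_cons_of_mem w hb)
        linarith
      obtain ⟨v, hv1, hv2⟩ := single_factor w hw y
      obtain ⟨x, hx1, hx2⟩ := ih (fun u hu => hL u (List.mem_cons_of_mem w hu)) v
      refine ⟨x, ?_, ?_⟩
      · rw [List.map_cons, List.prod_cons, ContinuousLinearMap.mul_apply, hx1, hv1]
      · calc ‖x‖ ≤ ((L.map fun w => 1 - ‖w‖).prod)⁻¹ * ‖v‖ := hx2
          _ ≤ ((L.map fun w => 1 - ‖w‖).prod)⁻¹ * ((1 - ‖w‖)⁻¹ * ‖y‖) :=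
              mul_le_mul_of_nonneg_left hv2 (le_of_lt (inv_pos.mpr hPL))
          _ = (((w :: L).map fun w => 1 - ‖w‖).prod)⁻¹ * ‖y‖ := by
              rw [List.map_cons, List.prod_cons, mul_inv]
              ring

/-- Let `z₁, …, z_n ∈ ℂ` with `|z_k| < 1` and let `R₁ > 0`. Then every
`y ∈ l^∞(ℕ)` has a preimage `x` under `R₁ (B - z₁ I) ⋯ (B - z_n I)` with
`‖x‖ ≤ ‖y‖ / (R₁ ∏_{k=1}^n (1 - |z_k|))`. -/
theorem stmt17 (n : ℕ) (hn : 0 < n) (z : Fin n → ℂ) (hz : ∀ k, ‖z k‖ < 1)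
    (R : ℝ) (hR : 0 < R) (y : lp (fun _ : ℕ => ℂ) ∞) :
    ∃ x : lp (fun _ : ℕ => ℂ) ∞,
      ((R : ℂ) • (List.ofFn fun k : Fin n =>
          backwardShift - z k • (1 : lp (fun _ : ℕ => ℂ) ∞ →L[ℂ] lp (fun _ : ℕ => ℂ) ∞)).prod)
          x = y ∧
      ‖x‖ ≤ ‖y‖ / (R * ∏ k : Fin n, (1 - ‖z k‖)) := by
  have hmem : ∀ w ∈ List.ofFn z, ‖w‖ < 1 := by
    intro w hw
    obtain ⟨k, rfl⟩ := List.mem_ofFn.mp hw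
    exact hz k
  obtain ⟨x₀, h1, h2⟩ := list_factor (List.ofFn z) hmem y
  have hQ : 0 < ∏ k : Fin n, (1 - ‖z k‖) :=
    Finset.prod_pos (fun k _ => by linarith [hz k])
  have hRne : (R : ℂ) ≠ 0 := by exact_mod_cast hR.ne'
  refine ⟨(R : ℂ)⁻¹ • x₀, ?_, ?_⟩
  · have hmap : ((List.ofFn z).map fun w => backwardShift -
        w • (1 : lp (fun _ : ℕ => ℂ) ∞ →L[ℂ] lp (fun _ : ℕ => ℂ) ∞)).prod
        = (List.ofFn fun k : Fin n =>
          backwardShift - z k • (1 : lp (fun _ : ℕ => ℂ) ∞ →L[ℂ] lp (fun _ : ℕ => ℂ) ∞)).prod := by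
      rw [List.map_ofFn]
      rfl
    rw [ContinuousLinearMap.smul_apply, map_smul, ← hmap, h1, smul_smul,
      mul_inv_cancel₀ hRne, one_smul]
  · have hprod : ((List.ofFn z).map fun w => 1 - ‖w‖).prod = ∏ k : Fin n, (1 - ‖z k‖) := by
      rw [List.map_ofFn, List.prod_ofFn]
      rfl
    rw [norm_smul, norm_inv, Complex.norm_real, Real.norm_of_nonneg hR.le]
    calc R⁻¹ * ‖x₀‖ ≤ R⁻¹ * ((∏ k : Fin n, (1 - ‖z k‖))⁻¹ * ‖y‖) := by
          apply mul_le_mul_of_nonneg_left _ (le_of_lt (inv_pos.mpr hR))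
          rwa [hprod] at h2
      _ = ‖y‖ / (R * ∏ k : Fin n, (1 - ‖z k‖)) := by
          rw [div_eq_mul_inv, mul_inv]
          ring
end
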